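/- Let β₀ > 0, ω := sqrt(1 + 7β₀), y₀(θ) := e^{iωθ}, and define μ₁ := -7β₀/(2(2ω+1)) and μ₋₁ := -7β₀/(2(1 - 2ω)) (assuming 2ω ≠ 1). Then: (a) the function y₁(θ) := μ₁·e^{i(ω+1)θ} + μ₋₁·e^{i(ω-1)θ} satisfies -y₁''(θ) - (1 + 7β₀)·y₁(θ) = cos θ · (y₀''(θ) + y₀(θ)) for all θ; and (b) μ₁ + μ₋₁ - 1 = -3(1 + 7β₀)/(3 + 28β₀). -/

import Mathlib

lemma hasDerivAt_cexp_mul (c : ℂ) (x : ℝ) :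
    HasDerivAt (fun θ : ℝ => Complex.exp (c * θ)) (c * Complex.exp (c * x)) x := by
  have h1 : HasDerivAt (fun θ : ℝ => (θ : ℂ)) 1 x := Complex.ofRealCLM.hasDerivAt
  have h2 : HasDerivAt (fun θ : ℝ => c * (θ : ℂ)) c x := by
    simpa using h1.const_mul c
  simpa [mul_comm] using h2.cexp

lemma deriv2_cexp_mul (c : ℂ) :
    deriv (deriv (fun θ : ℝ => Complex.exp (c * θ)))
      = fun x : ℝ => c ^ 2 * Complex.exp (c * x) := by
  have h1 : deriv (fun θ : ℝ => Complex.exp (c * θ))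
      = fun x : ℝ => c * Complex.exp (c * x) := by
    funext x; exact (hasDerivAt_cexp_mul c x).deriv
  rw [h1]
  funext x
  have := ((hasDerivAt_cexp_mul c x).const_mul c).deriv
  simpa [pow_two, mul_assoc] using this

lemma deriv2_two (a b c d : ℂ) :
    deriv (deriv (fun θ : ℝ => a * Complex.exp (c * θ) + b * Complex.exp (d * θ)))
      = fun x : ℝ => a * c ^ 2 * Complex.exp (c * x) + b * d ^ 2 * Complex.exp (d * x) := by
  have h1 : deriv (fun θ : ℝ => a * Complex.exp (c * θ) + b * Complex.exp (d * θ))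
      = fun x : ℝ => a * c * Complex.exp (c * x) + b * d * Complex.exp (d * x) := by
    funext x
    have := (((hasDerivAt_cexp_mul c x).const_mul a).add
      ((hasDerivAt_cexp_mul d x).const_mul b)).deriv
    simpa [Pi.add_def, mul_assoc, mul_comm, mul_left_comm] using this
  rw [h1]
  funext x
  have := (((hasDerivAt_cexp_mul c x).const_mul (a * c)).add
    ((hasDerivAt_cexp_mul d x).const_mul (b * d))).deriv
  simpa [Pi.add_def, pow_two, mul_assoc, mul_comm, mul_left_comm] using this

/-- The first-order perturbation term `y₁` of the degenerate-curve expansion solves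
`-y₁'' - (1+7β₀) y₁ = cos θ · (y₀'' + y₀)`, and `μ₁ + μ₋₁ - 1 = -3(1+7β₀)/(3+28β₀)`. -/
theorem stmt_19 (β₀ : ℝ) (hβ : 0 < β₀)
    (h2ω : 2 * Real.sqrt (1 + 7 * β₀) ≠ 1) :
    let ω := Real.sqrt (1 + 7 * β₀)
    let y₀ : ℝ → ℂ := fun θ => Complex.exp (Complex.I * (ω : ℂ) * (θ : ℂ))
    let μ₁ : ℝ := -7 * β₀ / (2 * (2 * ω + 1))
    let μm : ℝ := -7 * β₀ / (2 * (1 - 2 * ω))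
    let y₁ : ℝ → ℂ := fun θ =>
      (μ₁ : ℂ) * Complex.exp (Complex.I * ((ω : ℂ) + 1) * (θ : ℂ)) +
      (μm : ℂ) * Complex.exp (Complex.I * ((ω : ℂ) - 1) * (θ : ℂ))
    (∀ θ : ℝ, -(deriv (deriv y₁) θ) - (1 + 7 * (β₀ : ℂ)) * y₁ θ
        = ((Real.cos θ : ℝ) : ℂ) * (deriv (deriv y₀) θ + y₀ θ)) ∧
    μ₁ + μm - 1 = -3 * (1 + 7 * β₀) / (3 + 28 * β₀) := by
  intro ω y₀ μ₁ μm y₁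
  have hωsq : ω ^ 2 = 1 + 7 * β₀ := Real.sq_sqrt (by linarith)
  have hωpos : 0 < ω := Real.sqrt_pos.mpr (by linarith)
  have h1 : (2 : ℝ) * (2 * ω + 1) ≠ 0 := by positivity
  have h2 : (2 : ℝ) * (1 - 2 * ω) ≠ 0 := by
    intro h
    apply h2ω
    have : 1 - 2 * ω = 0 := by
      rcases mul_eq_zero.mp h with h' | h'
      · norm_num at h'
      · exact h'
    show 2 * ω = 1
    linarith
  have h3 : (3 : ℝ) + 28 * β₀ ≠ 0 := by positivity
  have h1c : (2 : ℂ) * (2 * (ω : ℂ) + 1) ≠ 0 := by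
    have := Complex.ofReal_ne_zero.mpr h1; push_cast at this; exact this
  have h2c : (2 : ℂ) * (1 - 2 * (ω : ℂ)) ≠ 0 := by
    have := Complex.ofReal_ne_zero.mpr h2; push_cast at this; exact this
  have hωc : ((ω : ℝ) : ℂ) ^ 2 = 1 + 7 * (β₀ : ℂ) := by
    have := congrArg (Complex.ofReal) hωsq; push_cast at this; exact this
  have hA : ((μ₁ : ℝ) : ℂ) * (2 * (2 * (ω : ℂ) + 1)) = -7 * β₀ := by
    show (((-7 * β₀ / (2 * (2 * ω + 1)) : ℝ)) : ℂ) * _ = _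
    push_cast
    field_simp
    rw [mul_div_cancel_right₀ _ (right_ne_zero_of_mul h1c)]
  have hB : ((μm : ℝ) : ℂ) * (2 * (1 - 2 * (ω : ℂ))) = -7 * β₀ := by
    show (((-7 * β₀ / (2 * (1 - 2 * ω)) : ℝ)) : ℂ) * _ = _
    push_cast
    field_simp
    rw [mul_div_cancel_right₀ _ (right_ne_zero_of_mul h2c)]
  constructor
  · intro θ
    have hy1 : deriv (deriv y₁) θ =
        (μ₁ : ℂ) * (Complex.I * ((ω : ℂ) + 1)) ^ 2 *
          Complex.exp (Complex.I * ((ω : ℂ) + 1) * θ) +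
        (μm : ℂ) * (Complex.I * ((ω : ℂ) - 1)) ^ 2 *
          Complex.exp (Complex.I * ((ω : ℂ) - 1) * θ) := by
      have := congrFun (deriv2_two (μ₁ : ℂ) (μm : ℂ)
        (Complex.I * ((ω : ℂ) + 1)) (Complex.I * ((ω : ℂ) - 1))) θ
      simpa [y₁] using this
    have hy0 : deriv (deriv y₀) θ =
        (Complex.I * (ω : ℂ)) ^ 2 * Complex.exp (Complex.I * (ω : ℂ) * θ) := by
      have := congrFun (deriv2_cexp_mul (Complex.I * (ω : ℂ))) θ
      simpa [y₀] using this
    simp only [y₁, y₀]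
    rw [hy1, hy0]
    have hEp : Complex.exp (Complex.I * ((ω : ℂ) + 1) * θ)
        = Complex.exp (Complex.I * (ω : ℂ) * θ) * Complex.exp (Complex.I * θ) := by
      rw [← Complex.exp_add]; ring_nf
    have hEm : Complex.exp (Complex.I * ((ω : ℂ) - 1) * θ)
        = Complex.exp (Complex.I * (ω : ℂ) * θ) * Complex.exp (-(Complex.I * θ)) := by
      rw [← Complex.exp_add]; ring_nf
    have hcos : ((Real.cos θ : ℝ) : ℂ)
        = (Complex.exp (Complex.I * θ) + Complex.exp (-(Complex.I * θ))) / 2 := by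
      rw [Complex.ofReal_cos, Complex.cos]
      ring_nf
    rw [hEp, hEm, hcos]
    set E₀ := Complex.exp (Complex.I * (ω : ℂ) * θ)
    set e := Complex.exp (Complex.I * (θ : ℂ))
    set e' := Complex.exp (-(Complex.I * (θ : ℂ)))
    linear_combination
      (-((μ₁ : ℝ) : ℂ) * ((ω : ℂ) + 1) ^ 2 * E₀ * e
        - ((μm : ℝ) : ℂ) * ((ω : ℂ) - 1) ^ 2 * E₀ * e'
        - (e + e') / 2 * (ω : ℂ) ^ 2 * E₀) * Complex.I_sq
      + ((((μ₁ : ℝ) : ℂ)) * E₀ * e + (((μm : ℝ) : ℂ)) * E₀ * e'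
        - (e + e') / 2 * E₀ + E₀ * e + E₀ * e') * hωc
      + (E₀ * e / 2) * hA + (E₀ * e' / 2) * hB
  · show (-7 * β₀ / (2 * (2 * ω + 1))) + (-7 * β₀ / (2 * (1 - 2 * ω))) - 1
      = -3 * (1 + 7 * β₀) / (3 + 28 * β₀)
    have h2' : 1 - 2 * ω ≠ 0 := right_ne_zero_of_mul h2
    field_simp
    nlinarith [hωsq]
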